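/- Let q, K be central variables and suppose P_r (r ≥ 1) are commuting elements with Θ(z) = exp(Σ_{r≥1} ((q^r-1)/r) P_r z^r) · exp(Σ_{k≥1} ((1-q^k)/(2k)) K^k z^{2k}) and E(-z) = ∏_{m≥0} Θ(q^m z) / ∏_{m≥0}(1 - q^{2m+1} K z^2) (formal infinite products converging coefficientwise since q^m z → 0). Then E(z) = exp(Σ_{r≥1} ((-1)^{r-1}/r) P_r z^r) · exp_q(Kz^2/(1-q))^{1/2}. -/

import Mathlib

noncomputable section

/-- A commutative `ℚ`-algebra (in fact field) containing the central variable `K`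
and the commuting variables `P_1, P_2, …`. -/
abbrev RP : Type := FractionRing (MvPolynomial ℕ ℚ)

/-- The central variable `K`. -/
def Kv : RP := algebraMap (MvPolynomial ℕ ℚ) RP (MvPolynomial.X 0)

/-- The commuting elements `P_r`, `r ≥ 1`. -/
def Pv (r : ℕ) : RP := algebraMap (MvPolynomial ℕ ℚ) RP (MvPolynomial.X r)

instance : TopologicalSpace RP := ⊥

/-- `ℚ((q))-type` coefficient ring: formal power series in `q`. -/
abbrev Cq : Type := PowerSeries RP

/-- The variable `q`, topologically nilpotent in `Cq`. -/
def qv : Cq := PowerSeries.X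

/-- Topology of coefficientwise convergence on `RP[[q]]`. -/
instance : TopologicalSpace Cq :=
  TopologicalSpace.induced (fun f (n : ℕ) => PowerSeries.coeff (R := RP) n f) inferInstance

/-- Topology of coefficientwise convergence on `RP[[q]][[z]]`, in which the infinite
products below converge (the `m`-th factor is `1 + O(q^m z)`). -/
instance : TopologicalSpace (PowerSeries Cq) :=
  TopologicalSpace.induced (fun f (n : ℕ) => PowerSeries.coeff (R := Cq) n f) inferInstance

/-- The exponential of a formal power series (with zero constant term) over a
commutative `ℚ`-algebra: `exp f = Σ_{k≥0} f^k/k!`; only `k ≤ n` contributes to the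
`n`-th coefficient. -/
def expPS {R : Type} [CommRing R] [Algebra ℚ R] (f : PowerSeries R) : PowerSeries R :=
  PowerSeries.mk fun n =>
    ∑ k ∈ Finset.range (n + 1), ((k.factorial : ℚ)⁻¹) • PowerSeries.coeff (R := R) n (f ^ k)



set_option linter.unusedSectionVars false
set_option maxHeartbeats 1600000

open PowerSeries Finset Filter Topology

namespace Aux

variable {R : Type} [CommRing R] [Algebra ℚ R]

theorem coeff_pow_eq_zero {f : R⟦X⟧} (hf : constantCoeff (R := R) f = 0) {n k : ℕ} (h : n < k) :
    coeff (R := R) n (f ^ k) = 0 :=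
  X_pow_dvd_iff.mp (pow_dvd_pow_of_dvd (X_dvd_iff.mpr hf) k) n h

def expT (N : ℕ) (f : R⟦X⟧) : R⟦X⟧ :=
  ∑ k ∈ Finset.range (N + 1), ((k.factorial : ℚ)⁻¹) • f ^ k

theorem coeff_expT (N n : ℕ) (f : R⟦X⟧) :
    coeff (R := R) n (expT N f) = ∑ k ∈ Finset.range (N + 1), ((k.factorial : ℚ)⁻¹) • coeff (R := R) n (f ^ k) := by
  simp [expT, PowerSeries.coeff_smul]

theorem coeff_expPS_eq {f : R⟦X⟧} (hf : constantCoeff (R := R) f = 0) {n N : ℕ} (hn : n ≤ N) :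
    coeff (R := R) n (expPS f) = coeff (R := R) n (expT N f) := by
  rw [coeff_expT, expPS, coeff_mk]
  refine Finset.sum_subset (Finset.range_subset_range.mpr (by omega)) ?_
  intro k hk hk'
  rw [coeff_pow_eq_zero hf (by simp at hk hk'; omega), smul_zero]

@[simp] theorem constantCoeff_expPS (f : R⟦X⟧) : constantCoeff (R := R) (expPS f) = 1 := by
  rw [← coeff_zero_eq_constantCoeff, expPS, coeff_mk]; simp

theorem qsmul_derivative (a : ℚ) (f : R⟦X⟧) :
    d⁄dX R (a • f) = a • d⁄dX R f := by
  ext n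
  simp [PowerSeries.coeff_derivative, PowerSeries.coeff_smul, smul_mul_assoc]

theorem fact_inv_succ (k : ℕ) :
    ((k + 1).factorial : ℚ)⁻¹ * (((k + 1 : ℕ)) : ℚ) = ((k.factorial : ℚ))⁻¹ := by
  rw [Nat.factorial_succ]; push_cast; rw [mul_inv]; field_simp

theorem derivative_expT (N : ℕ) (f : R⟦X⟧) :
    d⁄dX R (expT (N + 1) f) = expT N f * d⁄dX R f := by
  rw [expT, map_sum]
  simp_rw [qsmul_derivative]
  rw [Finset.sum_range_succ']
  have h0 : ((Nat.factorial 0 : ℚ))⁻¹ • d⁄dX R (f ^ 0) = 0 := by simp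
  rw [h0, add_zero]
  rw [expT, Finset.sum_mul]
  refine Finset.sum_congr rfl fun k _ => ?_
  have hl : d⁄dX R (f ^ (k + 1)) = (k + 1) • (f ^ k * d⁄dX R f) := by
    rw [Derivation.leibniz_pow]
    simp [smul_eq_mul, Nat.add_sub_cancel]
  rw [hl, ← Nat.cast_smul_eq_nsmul ℚ, smul_smul, fact_inv_succ, smul_mul_assoc]

theorem derivative_expPS {f : R⟦X⟧} (hf : constantCoeff (R := R) f = 0) :
    d⁄dX R (expPS f) = expPS f * d⁄dX R f := by
  ext n
  rw [PowerSeries.coeff_derivative, coeff_expPS_eq hf (le_refl (n + 1)),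
    ← PowerSeries.coeff_derivative, derivative_expT]
  rw [PowerSeries.coeff_mul, PowerSeries.coeff_mul]
  refine Finset.sum_congr rfl fun p hp => ?_
  rw [coeff_expPS_eq hf (Finset.HasAntidiagonal.antidiagonal.fst_le hp)]

theorem ode_unique {a F G : R⟦X⟧} (hF : d⁄dX R F = a * F) (hG : d⁄dX R G = a * G)
    (h0 : constantCoeff (R := R) F = constantCoeff (R := R) G) : F = G := by
  ext n
  induction n using Nat.strong_induction_on with
  | _ n ih =>
    match n with
    | 0 => simpa using h0
    | Nat.succ n =>
      have hFc := congrArg (coeff (R := R) n) hF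
      have hGc := congrArg (coeff (R := R) n) hG
      rw [PowerSeries.coeff_derivative] at hFc hGc
      have hsum : coeff (R := R) n (a * F) = coeff (R := R) n (a * G) := by
        rw [PowerSeries.coeff_mul, PowerSeries.coeff_mul]
        refine Finset.sum_congr rfl fun p hp => ?_
        rw [ih p.2 (Nat.lt_succ_of_le (Finset.HasAntidiagonal.antidiagonal.snd_le hp))]
      have hu : IsUnit ((n + 1 : ℕ) : R) := by
        have : ((n + 1 : ℕ) : R) = algebraMap ℚ R ((n + 1 : ℕ) : ℚ) := by
          simp [map_natCast]
        rw [this]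
        exact (IsUnit.mk0 _ (by positivity)).map _
      have := hFc.trans (hsum.trans hGc.symm)
      push_cast at this ⊢
      exact hu.mul_right_cancel (by push_cast at this ⊢; exact this)

theorem expPS_add {f g : R⟦X⟧} (hf : constantCoeff (R := R) f = 0) (hg : constantCoeff (R := R) g = 0) :
    expPS (f + g) = expPS f * expPS g := by
  have hfg : constantCoeff (R := R) (f + g) = 0 := by rw [map_add, hf, hg, add_zero]
  refine ode_unique (a := d⁄dX R (f + g)) ?_ ?_ ?_
  · rw [derivative_expPS hfg, mul_comm]
  · have : d⁄dX R (expPS f * expPS g)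
        = expPS f * d⁄dX R g * expPS g + expPS g * (expPS f * d⁄dX R f) := by
      rw [Derivation.leibniz, smul_eq_mul, smul_eq_mul, derivative_expPS hf, derivative_expPS hg]
      ring
    rw [this, map_add]; ring
  · simp

theorem expPS_zero : expPS (0 : R⟦X⟧) = 1 := by
  ext n
  rw [expPS, coeff_mk, Finset.sum_eq_single 0]
  · simp [PowerSeries.coeff_one]
  · intro k hk hk'
    rw [zero_pow hk', map_zero, smul_zero]
  · intro h; simp at h

theorem expPS_mul_expPS_neg {f : R⟦X⟧} (hf : constantCoeff (R := R) f = 0) :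
    expPS f * expPS (-f) = 1 := by
  rw [← expPS_add hf (by rw [map_neg, hf, neg_zero]), add_neg_cancel, expPS_zero]


def Lser (u : R⟦X⟧) : R⟦X⟧ :=
  PowerSeries.mk fun n => ∑ k ∈ Finset.range (n + 1), ((k : ℚ)⁻¹) • coeff (R := R) n (u ^ k)

def LT (N : ℕ) (u : R⟦X⟧) : R⟦X⟧ :=
  ∑ k ∈ Finset.range (N + 1), ((k : ℚ)⁻¹) • u ^ k

def geomT (N : ℕ) (u : R⟦X⟧) : R⟦X⟧ :=
  ∑ k ∈ Finset.range (N + 1), u ^ k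

@[simp] theorem constantCoeff_Lser (u : R⟦X⟧) : constantCoeff (R := R) (Lser u) = 0 := by
  rw [← coeff_zero_eq_constantCoeff, Lser, coeff_mk]
  simp

theorem coeff_LT (N n : ℕ) (u : R⟦X⟧) :
    coeff (R := R) n (LT N u) = ∑ k ∈ Finset.range (N + 1), ((k : ℚ)⁻¹) • coeff (R := R) n (u ^ k) := by
  simp [LT, PowerSeries.coeff_smul]

theorem coeff_Lser_eq {u : R⟦X⟧} (hu : constantCoeff (R := R) u = 0) {n N : ℕ} (hn : n ≤ N) :
    coeff (R := R) n (Lser u) = coeff (R := R) n (LT N u) := by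
  rw [coeff_LT, Lser, coeff_mk]
  refine Finset.sum_subset (Finset.range_subset_range.mpr (by omega)) ?_
  intro k hk hk'
  rw [coeff_pow_eq_zero hu (by simp at hk hk'; omega), smul_zero]

theorem nat_inv_succ (k : ℕ) : (((k + 1 : ℕ)) : ℚ)⁻¹ * (((k + 1 : ℕ)) : ℚ) = 1 := by
  rw [inv_mul_cancel₀]; positivity

theorem derivative_LT (N : ℕ) (u : R⟦X⟧) :
    d⁄dX R (LT (N + 1) u) = geomT N u * d⁄dX R u := by
  rw [LT, map_sum]
  simp_rw [qsmul_derivative]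
  rw [Finset.sum_range_succ']
  have h0 : (((0 : ℕ) : ℚ))⁻¹ • d⁄dX R (u ^ 0) = 0 := by simp
  rw [h0, add_zero, geomT, Finset.sum_mul]
  refine Finset.sum_congr rfl fun k _ => ?_
  have hl : d⁄dX R (u ^ (k + 1)) = (k + 1) • (u ^ k * d⁄dX R u) := by
    rw [Derivation.leibniz_pow]
    simp [smul_eq_mul, Nat.add_sub_cancel]
  rw [hl, ← Nat.cast_smul_eq_nsmul ℚ, smul_smul, nat_inv_succ, one_smul]

theorem coeff_geomT_mul_stable {u : R⟦X⟧} (hu : constantCoeff (R := R) u = 0) {q m m' : ℕ}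
    (h1 : q ≤ m) (h2 : q ≤ m') (w : R⟦X⟧) :
    coeff (R := R) q (geomT m u * w) = coeff (R := R) q (geomT m' u * w) := by
  have key : ∀ a, a ≤ q → coeff (R := R) a (geomT m u) = coeff (R := R) a (geomT m' u) := by
    intro a ha
    rw [geomT, geomT, map_sum, map_sum]
    have e1 : ∑ x ∈ Finset.range (m + 1), coeff (R := R) a (u ^ x)
        = ∑ x ∈ Finset.range (a + 1), coeff (R := R) a (u ^ x) := by
      refine (Finset.sum_subset (Finset.range_subset_range.mpr (by omega)) ?_).symm
      intro k hk hk'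
      exact coeff_pow_eq_zero hu (by simp at hk hk'; omega)
    have e2 : ∑ x ∈ Finset.range (m' + 1), coeff (R := R) a (u ^ x)
        = ∑ x ∈ Finset.range (a + 1), coeff (R := R) a (u ^ x) := by
      refine (Finset.sum_subset (Finset.range_subset_range.mpr (by omega)) ?_).symm
      intro k hk hk'
      exact coeff_pow_eq_zero hu (by simp at hk hk'; omega)
    rw [e1, e2]
  rw [PowerSeries.coeff_mul, PowerSeries.coeff_mul]
  refine Finset.sum_congr rfl fun p hp => ?_
  rw [key p.1 (Finset.HasAntidiagonal.antidiagonal.fst_le hp)]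

theorem coeff_derivative_Lser {u : R⟦X⟧} (hu : constantCoeff (R := R) u = 0) (n : ℕ) :
    coeff (R := R) n (d⁄dX R (Lser u)) = coeff (R := R) n (geomT n u * d⁄dX R u) := by
  rw [PowerSeries.coeff_derivative, coeff_Lser_eq hu (le_refl (n + 1)),
    ← PowerSeries.coeff_derivative, derivative_LT]

theorem one_sub_mul_derivative_Lser {u : R⟦X⟧} (hu : constantCoeff (R := R) u = 0) :
    (1 - u) * d⁄dX R (Lser u) = d⁄dX R u := by
  ext n
  rw [sub_mul, one_mul, map_sub, coeff_derivative_Lser hu]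
  have hmul : coeff (R := R) n (u * d⁄dX R (Lser u)) = coeff (R := R) n (u * (geomT n u * d⁄dX R u)) := by
    rw [PowerSeries.coeff_mul, PowerSeries.coeff_mul]
    refine Finset.sum_congr rfl fun p hp => ?_
    congr 1
    rw [coeff_derivative_Lser hu p.2,
      coeff_geomT_mul_stable hu (le_refl p.2) (Finset.HasAntidiagonal.antidiagonal.snd_le hp)]
  rw [hmul]
  have hug : u * (geomT n u * d⁄dX R u) =
      geomT n u * d⁄dX R u - d⁄dX R u + u ^ (n + 1) * d⁄dX R u := by
    have hA : ∑ k ∈ Finset.range (n + 2), u ^ k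
        = (∑ k ∈ Finset.range (n + 1), u ^ (k + 1)) + 1 := by
      rw [Finset.sum_range_succ']; simp
    have hB : ∑ k ∈ Finset.range (n + 2), u ^ k
        = (∑ k ∈ Finset.range (n + 1), u ^ k) + u ^ (n + 1) :=
      Finset.sum_range_succ _ _
    have hmg : u * geomT n u = geomT n u - 1 + u ^ (n + 1) := by
      rw [geomT, Finset.mul_sum]
      have h1 : ∑ k ∈ Finset.range (n + 1), u * u ^ k
          = ∑ k ∈ Finset.range (n + 1), u ^ (k + 1) :=
        Finset.sum_congr rfl fun k _ => (pow_succ' u k).symm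
      rw [h1]
      have := hA.symm.trans hB
      linear_combination this
    rw [← mul_assoc, hmg]; ring
  rw [hug]
  have hzero : coeff (R := R) n (u ^ (n + 1) * d⁄dX R u) = 0 := by
    have hd : (X : R⟦X⟧) ^ (n + 1) ∣ u ^ (n + 1) * d⁄dX R u :=
      dvd_mul_of_dvd_left (pow_dvd_pow_of_dvd (X_dvd_iff.mpr hu) (n + 1)) _
    exact X_pow_dvd_iff.mp hd n (by omega)
  rw [map_add, map_sub, hzero, add_zero]
  ring

theorem one_sub_mul_expPS_Lser {u : R⟦X⟧} (hu : constantCoeff (R := R) u = 0) :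
    (1 - u) * expPS (Lser u) = 1 := by
  refine ode_unique (a := 0) ?_ ?_ ?_
  · have : d⁄dX R ((1 - u) * expPS (Lser u))
        = (1 - u) * (expPS (Lser u) * d⁄dX R (Lser u)) + expPS (Lser u) * (- d⁄dX R u) := by
      rw [Derivation.leibniz, smul_eq_mul, smul_eq_mul,
        derivative_expPS (constantCoeff_Lser u)]
      have : d⁄dX R (1 - u) = - d⁄dX R u := by
        rw [map_sub, Derivation.map_one_eq_zero, zero_sub]
      rw [this]
      try ring
    rw [this]
    have h2 : (1 - u) * (expPS (Lser u) * d⁄dX R (Lser u))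
        = expPS (Lser u) * ((1 - u) * d⁄dX R (Lser u)) := by ring
    rw [h2, one_sub_mul_derivative_Lser hu, zero_mul]; ring
  · simp
  · simp [hu]

theorem one_sub_eq_expPS {u : R⟦X⟧} (hu : constantCoeff (R := R) u = 0) :
    1 - u = expPS (-Lser u) := by
  have h := one_sub_mul_expPS_Lser hu
  have h2 := expPS_mul_expPS_neg (constantCoeff_Lser u)
  calc 1 - u = (1 - u) * (expPS (Lser u) * expPS (-Lser u)) := by rw [h2, mul_one]
    _ = ((1 - u) * expPS (Lser u)) * expPS (-Lser u) := by ring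
    _ = expPS (-Lser u) := by rw [h, one_mul]


/-! ### double-coefficient congruence -/

theorem pow_coeff_congr {S : Type} [CommSemiring S] (f g : (PowerSeries (PowerSeries S))) (k : ℕ) :
    ∀ n j : ℕ,
      (∀ n' ≤ n, ∀ j' ≤ j, coeff (R := S) j' (coeff (R := (PowerSeries S)) n' f)
        = coeff (R := S) j' (coeff (R := (PowerSeries S)) n' g)) →
      coeff (R := S) j (coeff (R := (PowerSeries S)) n (f ^ k)) = coeff (R := S) j (coeff (R := (PowerSeries S)) n (g ^ k)) := by
  induction k with
  | zero => intro n j _; rfl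
  | succ k ih =>
    intro n j h
    rw [pow_succ, pow_succ, PowerSeries.coeff_mul, PowerSeries.coeff_mul, map_sum, map_sum]
    refine Finset.sum_congr rfl fun p hp => ?_
    rw [PowerSeries.coeff_mul, PowerSeries.coeff_mul]
    refine Finset.sum_congr rfl fun r hr => ?_
    have h1 := ih p.1 r.1 (fun n' hn' j' hj' => h n' (le_trans hn' (Finset.HasAntidiagonal.antidiagonal.fst_le hp))
      j' (le_trans hj' (Finset.HasAntidiagonal.antidiagonal.fst_le hr)))
    have h2 := h p.2 (Finset.HasAntidiagonal.antidiagonal.snd_le hp) r.2 (Finset.HasAntidiagonal.antidiagonal.snd_le hr)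
    rw [h1, h2]

theorem expPS_coeff_congr {S : Type} [CommRing S] [Algebra ℚ S]
    (f g : (PowerSeries (PowerSeries S))) (n j : ℕ)
    (h : ∀ n' ≤ n, ∀ j' ≤ j, coeff (R := S) j' (coeff (R := (PowerSeries S)) n' f)
        = coeff (R := S) j' (coeff (R := (PowerSeries S)) n' g)) :
    coeff (R := S) j (coeff (R := (PowerSeries S)) n (expPS f)) = coeff (R := S) j (coeff (R := (PowerSeries S)) n (expPS g)) := by
  rw [expPS, expPS, coeff_mk, coeff_mk, map_sum, map_sum]
  refine Finset.sum_congr rfl fun k _ => ?_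
  rw [PowerSeries.coeff_smul, PowerSeries.coeff_smul,
    pow_coeff_congr f g k n j h]

end Aux

section Topo

open scoped Topology

instance : DiscreteTopology RP := ⟨rfl⟩

theorem isInducing2 : IsInducing (fun (f : PowerSeries Cq) (n : ℕ) => PowerSeries.coeff (R := Cq) n f) :=
  ⟨rfl⟩

theorem isInducing1 : IsInducing (fun (f : Cq) (n : ℕ) => PowerSeries.coeff (R := RP) n f) := ⟨rfl⟩

instance : T2Space Cq :=
  Topology.IsEmbedding.t2Space
    ⟨isInducing1, fun f g h => PowerSeries.ext fun n => congrFun h n⟩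

instance : T2Space (PowerSeries Cq) :=
  Topology.IsEmbedding.t2Space
    ⟨isInducing2, fun f g h => PowerSeries.ext fun n => congrFun h n⟩

theorem tendsto_iff {α : Type} (l : Filter α) (P : α → PowerSeries Cq) (a : PowerSeries Cq) :
    Filter.Tendsto P l (𝓝 a) ↔ ∀ n j : ℕ, ∀ᶠ x in l,
      PowerSeries.coeff (R := RP) j (PowerSeries.coeff (R := Cq) n (P x))
        = PowerSeries.coeff (R := RP) j (PowerSeries.coeff (R := Cq) n a) := by
  rw [isInducing2.tendsto_nhds_iff, tendsto_pi_nhds]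
  refine forall_congr' fun n => ?_
  rw [isInducing1.tendsto_nhds_iff, tendsto_pi_nhds]
  refine forall_congr' fun j => ?_
  rw [show (𝓝 (PowerSeries.coeff (R := RP) j (PowerSeries.coeff (R := Cq) n a)))
      = pure (PowerSeries.coeff (R := RP) j (PowerSeries.coeff (R := Cq) n a)) from
    congrFun (nhds_discrete RP) _, Filter.tendsto_pure]
  rfl

theorem prod_expPS (g : ℕ → PowerSeries Cq) (hg : ∀ m, PowerSeries.constantCoeff (R := Cq) (g m) = 0)
    (F : Finset ℕ) : ∏ m ∈ F, expPS (g m) = expPS (∑ m ∈ F, g m) := by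
  classical
  induction F using Finset.induction with
  | empty => simp [Aux.expPS_zero]
  | insert _ _ hx ih =>
    rw [Finset.prod_insert hx, Finset.sum_insert hx, ih,
      ← Aux.expPS_add (hg _) (by rw [map_sum]; exact Finset.sum_eq_zero fun m _ => hg m)]

theorem hasProd_expPS (g : ℕ → PowerSeries Cq) (G : PowerSeries Cq)
    (hg0 : ∀ m, PowerSeries.constantCoeff (R := Cq) (g m) = 0)
    (hG : ∀ (j : ℕ) (F : Finset ℕ), Finset.range (j + 1) ⊆ F →
      ∀ (n' j' : ℕ), j' ≤ j →
        PowerSeries.coeff (R := RP) j' (PowerSeries.coeff (R := Cq) n' (∑ m ∈ F, g m))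
          = PowerSeries.coeff (R := RP) j' (PowerSeries.coeff (R := Cq) n' G)) :
    HasProd (fun m => expPS (g m)) (expPS G) := by
  refine (tendsto_iff _ _ _).mpr ?_
  intro n j
  rw [SummationFilter.unconditional_filter, Filter.eventually_atTop]
  refine ⟨Finset.range (j + 1), fun F hF => ?_⟩
  rw [prod_expPS g hg0 F]
  exact Aux.expPS_coeff_congr _ _ n j fun n' _ j' hj' => hG j F hF n' j' hj'

end Topo

section Tail

theorem constantCoeff_one_sub_qpow {d : ℕ} (hd : 1 ≤ d) :
    PowerSeries.constantCoeff (R := RP) (1 - (PowerSeries.X : Cq) ^ d) ≠ 0 := by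
  rw [map_sub, map_one, map_pow, PowerSeries.constantCoeff_X, zero_pow (by omega), sub_zero]
  exact one_ne_zero

theorem geomtail {d j : ℕ} (hd : 1 ≤ d) {F : Finset ℕ} (hF : Finset.range (j + 1) ⊆ F) :
    (PowerSeries.X : Cq) ^ (j + 1) ∣
      (1 - (PowerSeries.X : Cq) ^ d)⁻¹ - ∑ m ∈ F, ((PowerSeries.X : Cq) ^ d) ^ m := by
  set x : Cq := (PowerSeries.X : Cq) ^ d with hx
  have hc := constantCoeff_one_sub_qpow hd
  have hgeo : (1 - x) * ∑ m ∈ Finset.range (j + 1), x ^ m = 1 - x ^ (j + 1) := by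
    have h := geom_sum_mul x (j + 1)
    linear_combination -h
  have hinv : (1 - x)⁻¹ * (1 - x) = 1 := PowerSeries.inv_mul_cancel _ hc
  have hsum : ∑ m ∈ Finset.range (j + 1), x ^ m = (1 - x)⁻¹ * (1 - x ^ (j + 1)) := by
    rw [← hgeo, ← mul_assoc, hinv, one_mul]
  have hdvd1 : (PowerSeries.X : Cq) ^ (j + 1) ∣ (1 - x)⁻¹ * x ^ (j + 1) := by
    refine Dvd.dvd.mul_left ?_ _
    rw [hx, ← pow_mul]
    exact pow_dvd_pow _ (by nlinarith)
  have hdvd2 : (PowerSeries.X : Cq) ^ (j + 1) ∣ ∑ m ∈ F \ Finset.range (j + 1), x ^ m := by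
    refine Finset.dvd_sum fun m hm => ?_
    have hm' : j + 1 ≤ m := by
      rcases Finset.mem_sdiff.mp hm with ⟨_, h2⟩
      simpa using h2
    rw [hx, ← pow_mul]
    exact pow_dvd_pow _ (by nlinarith)
  have hsplit : (1 - x)⁻¹ - ∑ m ∈ F, x ^ m
      = (1 - x)⁻¹ * x ^ (j + 1) - ∑ m ∈ F \ Finset.range (j + 1), x ^ m := by
    rw [← Finset.sum_sdiff hF, hsum]
    ring
  rw [hsplit]
  exact dvd_sub hdvd1 hdvd2

theorem coeff_mul_of_dvd {c y : Cq} {j j' : ℕ} (h : (PowerSeries.X : Cq) ^ (j + 1) ∣ c)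
    (hj : j' ≤ j) : PowerSeries.coeff (R := RP) j' (y * c) = 0 :=
  PowerSeries.X_pow_dvd_iff.mp (Dvd.dvd.mul_left h y) j' (by omega)

theorem rescale_expPS (c : Cq) (h : PowerSeries Cq) :
    PowerSeries.rescale c (expPS h) = expPS (PowerSeries.rescale c h) := by
  refine PowerSeries.ext fun n => ?_
  rw [PowerSeries.coeff_rescale, expPS, expPS, PowerSeries.coeff_mk, PowerSeries.coeff_mk,
    Finset.mul_sum]
  refine Finset.sum_congr rfl fun k _ => ?_
  rw [show (PowerSeries.rescale c h) ^ k = PowerSeries.rescale c (h ^ k) from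
      (map_pow (PowerSeries.rescale c) h k).symm,
    PowerSeries.coeff_rescale, mul_smul_comm]

end Tail


section Specific

theorem coeff_Lser_CX2 {R : Type} [CommRing R] [Algebra ℚ R] (c : R) (n : ℕ) :
    PowerSeries.coeff (R := R) n (Aux.Lser (PowerSeries.C (R := R) c * PowerSeries.X ^ 2)) =
      if n = 0 then 0 else if n % 2 = 0 then ((n / 2 : ℕ) : ℚ)⁻¹ • c ^ (n / 2) else 0 := by
  rw [Aux.Lser, PowerSeries.coeff_mk]
  have hterm : ∀ k : ℕ, PowerSeries.coeff (R := R) n ((PowerSeries.C (R := R) c * PowerSeries.X ^ 2) ^ k)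
      = if n = 2 * k then c ^ k else 0 := by
    intro k
    rw [mul_pow, ← map_pow, ← pow_mul, PowerSeries.coeff_C_mul, PowerSeries.coeff_X_pow]
    simp [mul_ite]
  simp_rw [hterm]
  rw [Finset.sum_eq_single (n / 2)]
  · by_cases h0 : n = 0
    · subst h0; simp
    · by_cases he : n % 2 = 0
      · rw [if_pos (by omega : n = 2 * (n / 2)), if_neg h0, if_pos he]
      · rw [if_neg (by omega), smul_zero, if_neg h0, if_neg he]
  · intro b _ hb
    rw [if_neg (fun h => hb (by omega)), smul_zero]
  · intro h
    exact absurd (Finset.mem_range.mpr (by omega)) h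

theorem Ppart {n : ℕ} (hn : n ≠ 0) (y : Cq) :
    (1 - qv ^ n)⁻¹ * ((n : ℚ)⁻¹ • ((qv ^ n - 1) * y)) = (-(n : ℚ)⁻¹) • y := by
  have hc : PowerSeries.constantCoeff (R := RP) (1 - qv ^ n) ≠ 0 := by
    rw [map_sub, map_one, map_pow, qv, PowerSeries.constantCoeff_X, zero_pow hn, sub_zero]
    exact one_ne_zero
  have hinv : (1 - qv ^ n)⁻¹ * (1 - qv ^ n) = 1 := PowerSeries.inv_mul_cancel _ hc
  simp only [Algebra.smul_def, map_neg]
  linear_combination (-(algebraMap ℚ Cq (n : ℚ)⁻¹ * y)) * hinv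

theorem Kpart {k : ℕ} (hk : k ≠ 0) (y : Cq) :
    ((2 * k : ℕ) : ℚ)⁻¹ • (y * (1 - qv ^ k)⁻¹)
      + (-(k : ℚ)⁻¹) • (qv ^ k * (1 - qv ^ (2 * k))⁻¹ * y)
    = (1 - qv ^ (2 * k))⁻¹ * (((2 * k : ℕ) : ℚ)⁻¹ • ((1 - qv ^ k) * y)) := by
  have hck : PowerSeries.constantCoeff (R := RP) (1 - qv ^ k) ≠ 0 := by
    rw [map_sub, map_one, map_pow, qv, PowerSeries.constantCoeff_X, zero_pow hk, sub_zero]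
    exact one_ne_zero
  have hc2k : PowerSeries.constantCoeff (R := RP) (1 - qv ^ (2 * k)) ≠ 0 := by
    rw [map_sub, map_one, map_pow, qv, PowerSeries.constantCoeff_X, zero_pow (by omega), sub_zero]
    exact one_ne_zero
  have hi1 : (1 - qv ^ k)⁻¹ * (1 - qv ^ k) = 1 := PowerSeries.inv_mul_cancel _ hck
  have hi2 : (1 - qv ^ (2 * k)) * (1 - qv ^ (2 * k))⁻¹ = 1 := PowerSeries.mul_inv_cancel _ hc2k
  have hfac : (1 : Cq) - qv ^ (2 * k) = (1 - qv ^ k) * (1 + qv ^ k) := by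
    rw [show 2 * k = k + k from by omega, pow_add]; ring
  have h1 : ((1 : Cq) - qv ^ k)⁻¹ = (1 + qv ^ k) * (1 - qv ^ (2 * k))⁻¹ := by
    calc ((1 : Cq) - qv ^ k)⁻¹
        = (1 - qv ^ k)⁻¹ * ((1 - qv ^ (2 * k)) * (1 - qv ^ (2 * k))⁻¹) := by rw [hi2, mul_one]
      _ = ((1 - qv ^ k)⁻¹ * (1 - qv ^ k)) * ((1 + qv ^ k) * (1 - qv ^ (2 * k))⁻¹) := by
          rw [hfac]; ring
      _ = (1 + qv ^ k) * (1 - qv ^ (2 * k))⁻¹ := by rw [hi1, one_mul]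
  have hs : (k : ℚ)⁻¹ = ((2 * k : ℕ) : ℚ)⁻¹ * 2 := by
    have hkq : (k : ℚ) ≠ 0 := Nat.cast_ne_zero.mpr hk
    push_cast
    rw [mul_inv]
    field_simp
  rw [h1, hs]
  simp only [Algebra.smul_def, map_neg, map_mul, map_ofNat]
  ring


def uu (m : ℕ) : PowerSeries Cq :=
  PowerSeries.C (R := Cq) (qv ^ (2 * m + 1) * PowerSeries.C (R := RP) Kv) * PowerSeries.X ^ 2

def CQ : PowerSeries Cq :=
  PowerSeries.mk fun n => if n = 0 then 0 else if n % 2 = 0 then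
    (-((n / 2 : ℕ) : ℚ)⁻¹) • (qv ^ (n / 2) * (1 - qv ^ (2 * (n / 2)))⁻¹
      * PowerSeries.C (R := RP) (Kv ^ (n / 2)))
    else 0

theorem qv_geomtail {d j : ℕ} (hd : 1 ≤ d) {F : Finset ℕ} (hF : Finset.range (j + 1) ⊆ F) :
    (PowerSeries.X : Cq) ^ (j + 1) ∣ (1 - qv ^ d)⁻¹ - ∑ m ∈ F, (qv ^ d) ^ m := by
  rw [show qv = (PowerSeries.X : Cq) from rfl]
  exact geomtail hd hF

theorem hG1 (j : ℕ) (F : Finset ℕ) (hF : Finset.range (j + 1) ⊆ F) (n' j' : ℕ) (hj' : j' ≤ j) :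
    PowerSeries.coeff (R := RP) j' (PowerSeries.coeff (R := Cq) n' (∑ m ∈ F, -Aux.Lser (uu m)))
      = PowerSeries.coeff (R := RP) j' (PowerSeries.coeff (R := Cq) n' CQ) := by
  rw [map_sum]
  simp_rw [map_neg, uu, coeff_Lser_CX2, CQ, PowerSeries.coeff_mk]
  by_cases h0 : n' = 0
  · simp [h0]
  by_cases he : n' % 2 = 0
  swap
  · simp [h0, he]
  simp only [if_neg h0, if_pos he]
  set k := n' / 2 with hkdef
  have hk : k ≠ 0 := by omega
  have hck : ∀ m : ℕ, (qv ^ (2 * m + 1) * PowerSeries.C (R := RP) Kv) ^ k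
      = qv ^ k * (qv ^ (2 * k)) ^ m * PowerSeries.C (R := RP) (Kv ^ k) := by
    intro m
    rw [mul_pow, ← map_pow, ← pow_mul, show (2 * m + 1) * k = k + 2 * k * m from by ring,
      pow_add, pow_mul]
  simp_rw [hck]
  simp only [Algebra.smul_def, map_neg]
  rw [← sub_eq_zero, ← map_sub]
  set Aη : Cq := algebraMap ℚ Cq ((k : ℚ))⁻¹ with hAη
  set KC : Cq := PowerSeries.C (R := RP) (Kv ^ k) with hKC
  have hfold : (∑ m ∈ F, -(Aη * (qv ^ k * (qv ^ (2 * k)) ^ m * KC)))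
      - (-Aη * (qv ^ k * (1 - qv ^ (2 * k))⁻¹ * KC))
      = (Aη * qv ^ k * KC) * ((1 - qv ^ (2 * k))⁻¹ - ∑ m ∈ F, (qv ^ (2 * k)) ^ m) := by
    have hterm : ∀ m : ℕ, -(Aη * (qv ^ k * (qv ^ (2 * k)) ^ m * KC))
        = (-(Aη * qv ^ k * KC)) * (qv ^ (2 * k)) ^ m := fun m => by ring
    simp_rw [hterm]
    rw [← Finset.mul_sum]
    ring
  rw [hfold]
  exact coeff_mul_of_dvd (qv_geomtail (by omega) hF) hj'

theorem hG2lem (S : PowerSeries Cq) (hS0 : PowerSeries.coeff (R := Cq) 0 S = 0)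
    (j : ℕ) (F : Finset ℕ) (hF : Finset.range (j + 1) ⊆ F) (n' j' : ℕ) (hj' : j' ≤ j) :
    PowerSeries.coeff (R := RP) j' (PowerSeries.coeff (R := Cq) n' (∑ m ∈ F, PowerSeries.rescale (qv ^ m) S))
      = PowerSeries.coeff (R := RP) j'
          (PowerSeries.coeff (R := Cq) n' (PowerSeries.mk fun n =>
            if n = 0 then 0 else (1 - qv ^ n)⁻¹ * PowerSeries.coeff (R := Cq) n S)) := by
  rw [map_sum, PowerSeries.coeff_mk]
  simp_rw [PowerSeries.coeff_rescale]
  by_cases h0 : n' = 0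
  · simp [h0, hS0]
  rw [if_neg h0]
  have hswap : ∀ m : ℕ, ((qv ^ m) ^ n') = (qv ^ n') ^ m := by
    intro m; rw [← pow_mul, mul_comm, pow_mul]
  simp_rw [hswap]
  rw [← Finset.sum_mul]
  have hd : (PowerSeries.X : Cq) ^ (j + 1) ∣
      (1 - qv ^ n')⁻¹ - ∑ m ∈ F, (qv ^ n') ^ m := qv_geomtail (by omega) hF
  have hzero : PowerSeries.coeff (R := RP) j'
      ((PowerSeries.coeff (R := Cq) n' S) * ((1 - qv ^ n')⁻¹ - ∑ m ∈ F, (qv ^ n') ^ m)) = 0 :=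
    coeff_mul_of_dvd hd hj'
  have hexp : (1 - qv ^ n')⁻¹ * PowerSeries.coeff (R := Cq) n' S
      = (∑ m ∈ F, (qv ^ n') ^ m) * PowerSeries.coeff (R := Cq) n' S
        + (PowerSeries.coeff (R := Cq) n' S) * ((1 - qv ^ n')⁻¹ - ∑ m ∈ F, (qv ^ n') ^ m) := by ring
  rw [hexp, map_add, hzero, add_zero]

end Specific
/-- cf. Proposition 5.9: suppose
`Θ(z) = exp(Σ_{r≥1} ((q^r-1)/r) P_r z^r) ⬝ exp(Σ_{k≥1} ((1-q^k)/(2k)) K^k z^{2k})`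
and `E(-z) ∏_{m≥0} (1-q^{2m+1}Kz²) = ∏_{m≥0} Θ(q^m z)` (infinite products taken in
the topology of coefficientwise convergence).  Then
`E(z) = exp(Σ_{r≥1} ((-1)^{r-1}/r) P_r z^r) ⬝ exp_q(Kz²/(1-q))^{1/2}`, where the
square root means the exponential of half the exponent
`Σ_{k≥1} K^k z^{2k}/(2k(1-q^k))`. -/
theorem stmt17 (E Θ : PowerSeries Cq)
    (hΘ : Θ
      = expPS (PowerSeries.mk fun r =>
            if r = 0 then 0
            else ((r : ℚ)⁻¹) • ((qv ^ r - 1) * PowerSeries.C (R := RP) (Pv r)))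
        * expPS (PowerSeries.mk fun n =>
            if n = 0 then 0
            else if n % 2 = 0 then
              ((2 * (n / 2) : ℚ)⁻¹) • ((1 - qv ^ (n / 2)) * PowerSeries.C (R := RP) (Kv ^ (n / 2)))
            else 0))
    (hE : PowerSeries.rescale (-1 : Cq) E
          * ∏' m : ℕ, ((1 : PowerSeries Cq)
              - PowerSeries.C (R := Cq) (qv ^ (2 * m + 1) * PowerSeries.C (R := RP) Kv)
                * PowerSeries.X ^ 2)
        = ∏' m : ℕ, PowerSeries.rescale (qv ^ m) Θ) :
    E = expPS (PowerSeries.mk fun r =>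
          if r = 0 then 0
          else (((-1 : ℚ) ^ (r - 1)) * (r : ℚ)⁻¹) • PowerSeries.C (R := RP) (Pv r))
        * expPS (PowerSeries.mk fun n =>
            if n = 0 then 0
            else if n % 2 = 0 then
              ((2 * (n / 2) : ℚ)⁻¹)
                • (PowerSeries.C (R := RP) (Kv ^ (n / 2)) * (1 - qv ^ (n / 2))⁻¹)
            else 0) := by
  classical
  set A : PowerSeries Cq := (PowerSeries.mk fun r =>
      if r = 0 then 0
      else ((r : ℚ)⁻¹) • ((qv ^ r - 1) * PowerSeries.C (R := RP) (Pv r))) with hAdef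
  set B : PowerSeries Cq := (PowerSeries.mk fun n =>
      if n = 0 then 0
      else if n % 2 = 0 then
        ((2 * (n / 2) : ℚ)⁻¹) • ((1 - qv ^ (n / 2)) * PowerSeries.C (R := RP) (Kv ^ (n / 2)))
      else 0) with hBdef
  set A' : PowerSeries Cq := (PowerSeries.mk fun r =>
      if r = 0 then 0
      else (((-1 : ℚ) ^ (r - 1)) * (r : ℚ)⁻¹) • PowerSeries.C (R := RP) (Pv r)) with hA'def
  set B' : PowerSeries Cq := (PowerSeries.mk fun n =>
      if n = 0 then 0
      else if n % 2 = 0 then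
        ((2 * (n / 2) : ℚ)⁻¹) • (PowerSeries.C (R := RP) (Kv ^ (n / 2)) * (1 - qv ^ (n / 2))⁻¹)
      else 0) with hB'def
  have hA0 : PowerSeries.constantCoeff (R := Cq) A = 0 := by
    rw [← PowerSeries.coeff_zero_eq_constantCoeff_apply, hAdef, PowerSeries.coeff_mk]; simp
  have hB0 : PowerSeries.constantCoeff (R := Cq) B = 0 := by
    rw [← PowerSeries.coeff_zero_eq_constantCoeff_apply, hBdef, PowerSeries.coeff_mk]; simp
  have hA'0 : PowerSeries.constantCoeff (R := Cq) A' = 0 := by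
    rw [← PowerSeries.coeff_zero_eq_constantCoeff_apply, hA'def, PowerSeries.coeff_mk]; simp
  have hB'0 : PowerSeries.constantCoeff (R := Cq) B' = 0 := by
    rw [← PowerSeries.coeff_zero_eq_constantCoeff_apply, hB'def, PowerSeries.coeff_mk]; simp
  have hS0 : PowerSeries.coeff (R := Cq) 0 (A + B) = 0 := by
    rw [map_add, PowerSeries.coeff_zero_eq_constantCoeff_apply,
      PowerSeries.coeff_zero_eq_constantCoeff_apply, hA0, hB0, add_zero]
  set SQ : PowerSeries Cq := (PowerSeries.mk fun n =>
      if n = 0 then 0 else (1 - qv ^ n)⁻¹ * PowerSeries.coeff (R := Cq) n (A + B)) with hSQdef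
  -- second product
  have hΘ' : Θ = expPS (A + B) := by rw [hΘ]; exact (Aux.expPS_add hA0 hB0).symm
  have hfun2 : (fun m => PowerSeries.rescale (qv ^ m) Θ)
      = fun m => expPS (PowerSeries.rescale (qv ^ m) (A + B)) := by
    funext m; rw [hΘ', rescale_expPS]
  have hp2 : HasProd (fun m => PowerSeries.rescale (qv ^ m) Θ) (expPS SQ) := by
    rw [hfun2]
    refine hasProd_expPS _ _ (fun m => ?_) (fun j F hF n' j' hj' => ?_)
    · rw [← PowerSeries.coeff_zero_eq_constantCoeff_apply, PowerSeries.coeff_rescale,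
        pow_zero, one_mul, hS0]
    · rw [hSQdef]
      exact hG2lem (A + B) hS0 j F hF n' j' hj'
  have ht2 : (∏' m : ℕ, PowerSeries.rescale (qv ^ m) Θ) = expPS SQ := hp2.tprod_eq
  -- first product
  have hu0 : ∀ m, PowerSeries.constantCoeff (R := Cq) (uu m) = 0 := by
    intro m
    rw [uu, ← PowerSeries.coeff_zero_eq_constantCoeff_apply, PowerSeries.coeff_C_mul]
    simp
  have hfun1 : (fun m => (1 : PowerSeries Cq)
        - PowerSeries.C (R := Cq) (qv ^ (2 * m + 1) * PowerSeries.C (R := RP) Kv) * PowerSeries.X ^ 2)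
      = fun m => expPS (-Aux.Lser (uu m)) := by
    funext m
    exact Aux.one_sub_eq_expPS (hu0 m)
  have hL0 : ∀ m, PowerSeries.constantCoeff (R := Cq) (-Aux.Lser (uu m)) = 0 := by
    intro m; rw [map_neg, Aux.constantCoeff_Lser, neg_zero]
  have hp1 : HasProd (fun m => (1 : PowerSeries Cq)
      - PowerSeries.C (R := Cq) (qv ^ (2 * m + 1) * PowerSeries.C (R := RP) Kv) * PowerSeries.X ^ 2)
      (expPS CQ) := by
    rw [hfun1]
    exact hasProd_expPS _ _ hL0 (fun j F hF n' j' hj' => hG1 j F hF n' j' hj')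
  have ht1 : (∏' m : ℕ, ((1 : PowerSeries Cq)
      - PowerSeries.C (R := Cq) (qv ^ (2 * m + 1) * PowerSeries.C (R := RP) Kv) * PowerSeries.X ^ 2))
      = expPS CQ := hp1.tprod_eq
  rw [ht1, ht2] at hE
  -- the key algebraic identity
  have hre0 : PowerSeries.constantCoeff (R := Cq) (PowerSeries.rescale (-1 : Cq) (A' + B')) = 0 := by
    rw [← PowerSeries.coeff_zero_eq_constantCoeff_apply, PowerSeries.coeff_rescale, pow_zero,
      one_mul, map_add, PowerSeries.coeff_zero_eq_constantCoeff_apply,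
      PowerSeries.coeff_zero_eq_constantCoeff_apply, hA'0, hB'0, add_zero]
  have hCQ0 : PowerSeries.constantCoeff (R := Cq) CQ = 0 := by
    rw [CQ, ← PowerSeries.coeff_zero_eq_constantCoeff_apply, PowerSeries.coeff_mk]; simp
  have hKEY : PowerSeries.rescale (-1 : Cq) (A' + B') + CQ = SQ := by
    refine PowerSeries.ext fun n => ?_
    rw [map_add, PowerSeries.coeff_rescale, map_add, hA'def, hB'def, hSQdef, CQ,
      PowerSeries.coeff_mk, PowerSeries.coeff_mk, PowerSeries.coeff_mk, PowerSeries.coeff_mk,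
      map_add, hAdef, hBdef, PowerSeries.coeff_mk, PowerSeries.coeff_mk]
    by_cases h0 : n = 0
    · simp [h0]
    by_cases he : n % 2 = 0
    swap
    · simp only [if_neg h0, if_neg he, add_zero]
      have hodd : Odd n := Nat.odd_iff.mpr (by omega)
      have h1 : ((-1 : Cq)) ^ n = -1 := hodd.neg_one_pow
      have h2 : ((-1 : ℚ)) ^ (n - 1) = 1 :=
        Even.neg_one_pow ⟨(n - 1) / 2, by omega⟩
      rw [h1, h2, one_mul, Ppart h0]
      simp only [Algebra.smul_def, map_neg]
      ring
    · simp only [if_neg h0, if_pos he]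
      set k := n / 2 with hkdef
      have hk : k ≠ 0 := by omega
      have hn2 : n = 2 * k := by omega
      rw [hn2]
      have h1 : ((-1 : Cq)) ^ (2 * k) = 1 := Even.neg_one_pow ⟨k, by omega⟩
      have h2 : ((-1 : ℚ)) ^ (2 * k - 1) = -1 := Odd.neg_one_pow ⟨k - 1, by omega⟩
      have hsc : (2 * (((2 * k : ℕ) : ℚ) / 2))⁻¹ = ((2 * k : ℕ) : ℚ)⁻¹ := by
        push_cast; ring_nf
      rw [h1, one_mul, h2, hsc, mul_add, Ppart (by omega : 2 * k ≠ 0)]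
      have hKp := Kpart hk (PowerSeries.C (R := RP) (Kv ^ k))
      simp only [Algebra.smul_def, map_neg, map_mul, map_one] at hKp ⊢
      linear_combination hKp
  have hG : PowerSeries.rescale (-1 : Cq) (expPS A' * expPS B') * expPS CQ = expPS SQ := by
    rw [← Aux.expPS_add hA'0 hB'0, rescale_expPS, ← Aux.expPS_add hre0 hCQ0, hKEY]
  have hEq : PowerSeries.rescale (-1 : Cq) E
      = PowerSeries.rescale (-1 : Cq) (expPS A' * expPS B') := by
    have h2 := hE.trans hG.symm
    have hc := congrArg (· * expPS (-CQ)) h2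
    rwa [mul_assoc, mul_assoc, Aux.expPS_mul_expPS_neg hCQ0, mul_one, mul_one] at hc
  have hfin := congrArg (PowerSeries.rescale (-1 : Cq)) hEq
  rwa [PowerSeries.rescale_rescale, PowerSeries.rescale_rescale,
    show ((-1 : Cq) * (-1 : Cq)) = 1 from by ring, PowerSeries.rescale_one,
    RingHom.id_apply, RingHom.id_apply] at hfin

end
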